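/- Let F(t₁,t₂,t₃,t₄) = (1/3)t₁t₃t₄ + (1/6)t₂t₃² + (i/(36√3))t₄t₁⁴ + (i/(6√3))t₂t₄t₁² + t₂⁴/216 + (i/(6√3))t₂²t₄ + (1/6)t₄²·log t₄ and F_{B₄}(x₁,x₂,x₃,x₄) = (1/108)x₄x₁⁴ + (1/6)x₂x₄x₁² + x₃x₄x₁ − x₂⁴/72 + (1/2)x₂x₃² + (1/2)x₂²x₄ + (3/2)x₄²·Log x₄, where Log is the principal branch of the complex logarithm. Then for all t₁, t₂, t₃ ∈ ℂ and all real t₄ > 0: F_{B₄}(−i√3·t₁, −t₂, t₃, −(i/√3)·t₄) = −3·F(t₁,t₂,t₃,t₄) + ((log 3)/4 + iπ/4)·t₄². (Hence the logarithmic Dubrovin–Frobenius manifold obtained from gl₄ is equivalent to the one on the orbit space of the reflection group B₄, since potentials differing by a constant rescaling of the flat coordinates, an overall factor, and a quadratic polynomial define equivalent Frobenius structures.) -/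

import Mathlib

/-- The potential (frob4) of the logarithmic Dubrovin–Frobenius manifold for `gl₄`,
with `t₁, t₂, t₃` complex and `t₄` real positive (real natural logarithm). -/
noncomputable def Fgl4 (t1 t2 t3 : ℂ) (t4 : ℝ) : ℂ :=
  (1 / 3 : ℂ) * t1 * t3 * (t4 : ℂ) + (1 / 6 : ℂ) * t2 * t3 ^ 2 +
    (Complex.I / (36 * (Real.sqrt 3 : ℂ))) * (t4 : ℂ) * t1 ^ 4 +
    (Complex.I / (6 * (Real.sqrt 3 : ℂ))) * t2 * (t4 : ℂ) * t1 ^ 2 +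
    t2 ^ 4 / 216 +
    (Complex.I / (6 * (Real.sqrt 3 : ℂ))) * t2 ^ 2 * (t4 : ℂ) +
    (1 / 6 : ℂ) * (t4 : ℂ) ^ 2 * (Real.log t4 : ℂ)

/-- The Arsie–Lorenzoni–Mencattini–Moroni potential on the orbit space of `B₄`,
with `Log` the principal branch of the complex logarithm. -/
noncomputable def FB4 (x1 x2 x3 x4 : ℂ) : ℂ :=
  (1 / 108 : ℂ) * x4 * x1 ^ 4 + (1 / 6 : ℂ) * x2 * x4 * x1 ^ 2 + x3 * x4 * x1 -
    x2 ^ 4 / 72 + (1 / 2 : ℂ) * x2 * x3 ^ 2 + (1 / 2 : ℂ) * x2 ^ 2 * x4 +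
    (3 / 2 : ℂ) * x4 ^ 2 * Complex.log x4

/-- for all `t₁, t₂, t₃ ∈ ℂ` and real `t₄ > 0`,
`F_{B₄}(−i√3·t₁, −t₂, t₃, −(i/√3)·t₄) = −3·F(t₁,t₂,t₃,t₄) + ((log 3)/4 + iπ/4)·t₄²`. -/
theorem gl4_equiv_B4 :
    ∀ (t1 t2 t3 : ℂ) (t4 : ℝ), 0 < t4 →
      FB4 (-(Complex.I * (Real.sqrt 3 : ℂ)) * t1) (-t2) t3
          (-(Complex.I / (Real.sqrt 3 : ℂ)) * (t4 : ℂ)) =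
        -3 * Fgl4 t1 t2 t3 t4 +
          ((Real.log 3 : ℂ) / 4 + Complex.I * (Real.pi : ℂ) / 4) * (t4 : ℂ) ^ 2 := by
  intro t1 t2 t3 t4 ht4
  have hs3 : (0:ℝ) < Real.sqrt 3 := Real.sqrt_pos.2 (by norm_num)
  have hs3c : ((Real.sqrt 3 : ℝ) : ℂ) ≠ 0 := by exact_mod_cast hs3.ne'
  have hsq : ((Real.sqrt 3 : ℝ) : ℂ) ^ 2 = 3 := by
    norm_cast; rw [Real.sq_sqrt]; norm_num
  have h4 : -(Complex.I / (Real.sqrt 3 : ℂ)) * (t4 : ℂ)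
      = ((t4 / Real.sqrt 3 : ℝ) : ℂ) * (-Complex.I) := by
    push_cast; field_simp
  have hlog : Complex.log (-(Complex.I / (Real.sqrt 3 : ℂ)) * (t4 : ℂ))
      = (Real.log (t4 / Real.sqrt 3) : ℂ) + (-(Real.pi / 2) * Complex.I) := by
    rw [h4, Complex.log_ofReal_mul (by positivity) (by simp [Complex.I_ne_zero]),
      Complex.log_neg_I]
  have hlogr : (Real.log (t4 / Real.sqrt 3) : ℂ)
      = (Real.log t4 : ℂ) - (Real.log 3 : ℂ) / 2 := by
    rw [Real.log_div ht4.ne' hs3.ne', Real.log_sqrt (by norm_num)]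
    push_cast; ring
  have e1 : Complex.I / ((Real.sqrt 3 : ℝ) : ℂ)
      = Complex.I * ((Real.sqrt 3 : ℝ) : ℂ) / 3 := by
    field_simp
    linear_combination (-1) * hsq
  have e2 : Complex.I / (36 * ((Real.sqrt 3 : ℝ) : ℂ))
      = Complex.I * ((Real.sqrt 3 : ℝ) : ℂ) / 108 := by
    field_simp
    linear_combination (-36) * hsq
  have e3 : Complex.I / (6 * ((Real.sqrt 3 : ℝ) : ℂ))
      = Complex.I * ((Real.sqrt 3 : ℝ) : ℂ) / 18 := by
    field_simp
    linear_combination (-6) * hsq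
  rw [FB4, Fgl4, hlog, hlogr, e1, e2, e3]
  set w : ℂ := Complex.I * ((Real.sqrt 3 : ℝ) : ℂ) with hw
  have hw2 : w ^ 2 = -3 := by
    rw [hw, mul_pow, Complex.I_sq, hsq]; ring
  linear_combination
    (-(w * (w ^ 2 - 3) / 324) * (t4 : ℂ) * t1 ^ 4
      + (w / 18) * t2 * (t4 : ℂ) * t1 ^ 2
      + (1 / 3 : ℂ) * t1 * t3 * (t4 : ℂ)
      + (t4 : ℂ) ^ 2 * ((Real.log t4 : ℂ) / 6 - (Real.log 3 : ℂ) / 12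
          - (Real.pi : ℂ) * Complex.I / 12)) * hw2
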